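/- Let s be the number of rounds required to orthogonalize M players onto K arms, where in each round every unassigned player independently and uniformly picks one of the first K arms and becomes assigned if no other player (assigned or unassigned) picks the same arm. Then E[s] <= M(K-1)(K+1)/(K-M), assuming M < K. -/

import Mathlib

open MeasureTheory ProbabilityTheory Finset
open scoped ENNReal

/-- Orthogonalization process: `assigned U r i ω` is the arm (if any) that player `i`
holds after `r` rounds, where in each round every unassigned player picks the arm
`U r i ω` (assigned players keep playing their arm) and an unassigned player becomes
assigned to its picked arm if no other player picks the same arm in that round. -/
def assigned {Ω : Type*} {K M : ℕ} (U : ℕ → Fin M → Ω → Fin K) :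
    ℕ → Fin M → Ω → Option (Fin K)
  | 0, _, _ => none
  | r + 1, i, ω =>
    let pick : Fin M → Fin K := fun j => (assigned U r j ω).getD (U r j ω)
    match assigned U r i ω with
    | some j => some j
    | none =>
      if ∀ j : Fin M, j ≠ i → pick j ≠ pick i then some (pick i) else none

lemma assigned_succ' {Ω : Type*} {K M : ℕ} (U : ℕ → Fin M → Ω → Fin K) (r : ℕ) (i : Fin M)
    (ω : Ω) :
    assigned U (r+1) i ω =
      match assigned U r i ω with
      | some j => some j
      | none =>
        if ∀ j : Fin M, j ≠ i →
            (assigned U r j ω).getD (U r j ω) ≠ (assigned U r i ω).getD (U r i ω)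
        then some ((assigned U r i ω).getD (U r i ω)) else none := rfl

lemma assigned_congr' {Ω Ω' : Type*} {K M : ℕ} (U : ℕ → Fin M → Ω → Fin K)
    (V : ℕ → Fin M → Ω' → Fin K) {ω : Ω} {ω' : Ω'} :
    ∀ r : ℕ, (∀ t, t < r → ∀ j, U t j ω = V t j ω') →
      ∀ i, assigned U r i ω = assigned V r i ω' := by
  intro r
  induction r with
  | zero => intro _ i; rfl
  | succ r ih =>
    intro h i
    have IH : ∀ j, assigned U r j ω = assigned V r j ω' :=
      ih (fun t ht j => h t (ht.trans (Nat.lt_succ_self r)) j)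
    have hU : ∀ j, U r j ω = V r j ω' := h r (Nat.lt_succ_self r)
    rw [assigned_succ', assigned_succ']
    simp only [IH, hU]

lemma assigned_stay' {Ω : Type*} {K M : ℕ} (U : ℕ → Fin M → Ω → Fin K) {r : ℕ} {i : Fin M}
    {ω : Ω} {a : Fin K} (h : assigned U r i ω = some a) : assigned U (r+1) i ω = some a := by
  rw [assigned_succ', h]

/-- generic source on a finite index set -/
def Ugen (K M : ℕ) (hK : 0 < K) (S : Finset (ℕ × Fin M)) : ℕ → Fin M → (S → Fin K) → Fin K :=
  fun t j v => if h : (t, j) ∈ S then v ⟨(t, j), h⟩ else ⟨0, hK⟩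

section

variable {Ω : Type*} {K M : ℕ} (U : ℕ → Fin M → Ω → Fin K)

/-- restriction of the randomness to a finite index set -/
def restr (S : Finset (ℕ × Fin M)) : Ω → (S → Fin K) := fun ω p => U p.1.1 p.1.2 ω

lemma assigned_eq_gen (hK : 0 < K) (r : ℕ) (i : Fin M) (ω : Ω) :
    assigned U r i ω
      = assigned (Ugen K M hK (range r ×ˢ univ)) r i (restr U (range r ×ˢ univ) ω) := by
  refine assigned_congr' _ _ r (fun t ht j => ?_) i
  have h : (t, j) ∈ range r ×ˢ (univ : Finset (Fin M)) := by
    simp [Finset.mem_product, Finset.mem_range, ht]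
  simp [Ugen, h, restr]

lemma config_preimage (hK : 0 < K) (r : ℕ) (Q : (Fin M → Option (Fin K)) → Prop) :
    {ω | Q (fun j => assigned U r j ω)}
      = restr U (range r ×ˢ univ) ⁻¹'
        {v | Q (fun j => assigned (Ugen K M hK (range r ×ˢ univ)) r j v)} := by
  ext ω
  simp only [Set.mem_setOf_eq, Set.mem_preimage]
  rw [show (fun j => assigned (Ugen K M hK (range r ×ˢ univ)) r j (restr U (range r ×ˢ univ) ω))
      = fun j => assigned U r j ω from funext fun j => (assigned_eq_gen U hK r j ω).symm]

lemma measurableSet_config [MeasurableSpace Ω] (hmeas : ∀ n i, Measurable (U n i)) (hK : 0 < K)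
    (r : ℕ) (Q : (Fin M → Option (Fin K)) → Prop) :
    MeasurableSet {ω | Q (fun j => assigned U r j ω)} := by
  rw [config_preimage U hK r Q]
  exact (measurable_pi_lambda (restr U (range r ×ˢ univ)) (fun p => hmeas p.1.1 p.1.2))
    ((Set.to_countable _).measurableSet)

lemma indep_round [MeasurableSpace Ω] (P : Measure Ω)
    (hindep : iIndepFun (fun (p : ℕ × Fin M) ω => U p.1 p.2 ω) P)
    (hmeas : ∀ n i, Measurable (U n i)) (hK : 0 < K) (r : ℕ)
    (Q : (Fin M → Option (Fin K)) → Prop)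
    (B : Set (({r} ×ˢ (univ : Finset (Fin M)) : Finset (ℕ × Fin M)) → Fin K)) :
    P ({ω | Q (fun j => assigned U r j ω)} ∩ restr U ({r} ×ˢ univ) ⁻¹' B)
      = P {ω | Q (fun j => assigned U r j ω)} * P (restr U ({r} ×ˢ univ) ⁻¹' B) := by
  have hdisj : Disjoint (range r ×ˢ (univ : Finset (Fin M))) ({r} ×ˢ univ) := by
    rw [Finset.disjoint_left]
    rintro ⟨t, j⟩ hS hT
    simp only [Finset.mem_product, Finset.mem_range, Finset.mem_singleton] at hS hT
    omega
  have hind := hindep.indepFun_finset (range r ×ˢ univ) ({r} ×ˢ univ) hdisj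
    (fun p => hmeas p.1 p.2)
  rw [config_preimage U hK r Q]
  exact hind.measure_inter_preimage_eq_mul _ _
    ((Set.to_countable _).measurableSet) ((Set.to_countable _).measurableSet)

/-- the success event of player `i` in round `r+1`, given the configuration `c` of
assignments after round `r` -/
def SuccSet (r : ℕ) (i : Fin M) (c : Fin M → Option (Fin K)) : Set Ω :=
  {ω | (∀ j : Fin M, ∀ a, c j = some a → U r i ω ≠ a) ∧
       (∀ j : Fin M, c j = none → j ≠ i → U r j ω ≠ U r i ω)}

lemma succ_preimage (r : ℕ) (i : Fin M) (c : Fin M → Option (Fin K)) :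
    SuccSet U r i c = restr U ({r} ×ˢ univ) ⁻¹'
      {v | (∀ j : Fin M, ∀ a, c j = some a → v ⟨(r, i), by simp⟩ ≠ a) ∧
           (∀ j : Fin M, c j = none → j ≠ i →
             v ⟨(r, j), by simp⟩ ≠ v ⟨(r, i), by simp⟩)} := rfl

lemma measurableSet_succ [MeasurableSpace Ω] (hmeas : ∀ n i, Measurable (U n i))
    (r : ℕ) (i : Fin M) (c : Fin M → Option (Fin K)) :
    MeasurableSet (SuccSet U r i c) := by
  rw [succ_preimage]
  refine (measurable_pi_lambda (restr U ({r} ×ˢ univ)) (fun p => hmeas p.1.1 p.1.2)) ?_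
  exact (Set.to_countable _).measurableSet

lemma succ_prob_ge [MeasurableSpace Ω] (P : Measure Ω) [IsProbabilityMeasure P]
    (hindep : iIndepFun (fun (p : ℕ × Fin M) ω => U p.1 p.2 ω) P)
    (hmeas : ∀ n i, Measurable (U n i))
    (hunif : ∀ n i (j : Fin K), P {ω | U n i ω = j} = (K : ENNReal)⁻¹)
    (hM : 0 < M) (hMK : M < K) (r : ℕ) (i : Fin M) (c : Fin M → Option (Fin K))
    (hci : c i = none) :
    ((K - M + 1 : ℕ) : ℝ≥0∞) / K * (1 - (K:ℝ≥0∞)⁻¹) ^ (M - 1) ≤ P (SuccSet U r i c) := by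
  have hK : 0 < K := hM.trans hMK
  classical
  set J : Finset (Fin M) := univ.filter (fun j => c j = none ∧ j ≠ i) with hJ
  set occ : Finset (Fin K) :=
    (univ.filter (fun j : Fin M => (c j).isSome)).image (fun j => (c j).getD ⟨0, hK⟩) with hocc
  set S : Finset (ℕ × Fin M) := {r} ×ˢ insert i J with hS
  set sets : Fin K → ℕ × Fin M → Set (Fin K) :=
    fun a p => if p.2 = i then {a} else {a}ᶜ with hsets
  set W : Fin K → Set Ω := fun a => ⋂ p ∈ S, (fun ω => U p.1 p.2 ω) ⁻¹' sets a p with hW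
  have hmemW : ∀ a ω, ω ∈ W a ↔ (U r i ω = a ∧ ∀ j ∈ J, U r j ω ≠ a) := by
    intro a ω
    simp only [hW, Set.mem_iInter, hS, Finset.mem_product, Finset.mem_singleton,
      Finset.mem_insert, Set.mem_preimage]
    constructor
    · intro h
      refine ⟨?_, fun j hj => ?_⟩
      · have := h (r, i) ⟨rfl, Or.inl rfl⟩
        simpa [hsets] using this
      · have hji : j ≠ i := (Finset.mem_filter.mp hj).2.2
        have := h (r, j) ⟨rfl, Or.inr hj⟩
        simpa [hsets, hji] using this
    · rintro ⟨h1, h2⟩ ⟨t, j⟩ ⟨ht, hj⟩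
      subst ht
      rcases hj with rfl | hj
      · simpa [hsets] using h1
      · have hji : j ≠ i := (Finset.mem_filter.mp hj).2.2
        simpa [hsets, hji] using h2 j hj
  have hWsub : ∀ a ∈ occᶜ, W a ⊆ SuccSet U r i c := by
    intro a ha ω hω
    rw [hmemW] at hω
    have hanotocc : a ∉ occ := Finset.mem_compl.mp ha
    constructor
    · intro j b hjb hab
      apply hanotocc
      rw [hocc, Finset.mem_image]
      exact ⟨j, Finset.mem_filter.mpr ⟨Finset.mem_univ j, by rw [hjb]; rfl⟩,
        by rw [hjb]; simpa using (hω.1 ▸ hab).symm⟩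
    · intro j hjn hji heq
      exact hω.2 j (Finset.mem_filter.mpr ⟨Finset.mem_univ j, hjn, hji⟩) (hω.1 ▸ heq)
  have hiJ : i ∉ J := by simp [hJ]
  have hPW : ∀ a, P (W a) = (K:ℝ≥0∞)⁻¹ * ((1 - (K:ℝ≥0∞)⁻¹) ^ J.card) := by
    intro a
    have := hindep.measure_inter_preimage_eq_mul (S := S) (sets := sets a)
      (fun p _ => (Set.to_countable _).measurableSet)
    rw [hW, this, hS, Finset.prod_product, Finset.prod_singleton, Finset.prod_insert hiJ]
    have h1 : P ((fun ω => U r i ω) ⁻¹' sets a (r, i)) = (K:ℝ≥0∞)⁻¹ := by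
      simp only [hsets, if_pos rfl]
      rw [show (fun ω => U r i ω) ⁻¹' {a} = {ω | U r i ω = a} from rfl]
      exact hunif r i a
    have h2 : ∀ j ∈ J, P ((fun ω => U r j ω) ⁻¹' sets a (r, j)) = 1 - (K:ℝ≥0∞)⁻¹ := by
      intro j hj
      have hji : j ≠ i := (Finset.mem_filter.mp hj).2.2
      simp only [hsets, if_neg hji]
      rw [show (fun ω => U r j ω) ⁻¹' {a}ᶜ = {ω | U r j ω = a}ᶜ from rfl,
        measure_compl (by exact (hmeas r j) (MeasurableSet.singleton a)) (measure_ne_top _ _),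
        measure_univ, hunif r j a]
    rw [h1, Finset.prod_congr rfl h2, Finset.prod_const]
  have hdisj : (↑(occᶜ) : Set (Fin K)).PairwiseDisjoint W := by
    intro a _ b _ hab
    refine Set.disjoint_left.mpr fun ω hωa hωb => ?_
    rw [hmemW] at hωa hωb
    exact hab (hωa.1 ▸ hωb.1 ▸ rfl)
  have hmeasW : ∀ a ∈ occᶜ, MeasurableSet (W a) := by
    intro a _
    refine MeasurableSet.biInter (Finset.countable_toSet S) (fun p _ => ?_)
    exact (hmeas p.1 p.2) ((Set.to_countable _).measurableSet)
  have hunion : P (⋃ a ∈ occᶜ, W a) = ∑ a ∈ occᶜ, P (W a) :=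
    measure_biUnion_finset hdisj hmeasW
  have hsub : (⋃ a ∈ occᶜ, W a) ⊆ SuccSet U r i c := Set.iUnion₂_subset hWsub
  have hJcard : J.card ≤ M - 1 := by
    have : J ⊆ univ.erase i := fun j hj => Finset.mem_erase.mpr
      ⟨(Finset.mem_filter.mp hj).2.2, Finset.mem_univ j⟩
    calc J.card ≤ (univ.erase i).card := Finset.card_le_card this
    _ = M - 1 := by
      rw [Finset.card_erase_of_mem (Finset.mem_univ i), Finset.card_univ, Fintype.card_fin]
  have hocccard : occ.card ≤ M - 1 := by
    have h1 : occ.card ≤ (univ.filter (fun j : Fin M => (c j).isSome)).card :=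
      Finset.card_image_le
    have h2 : (univ.filter (fun j : Fin M => (c j).isSome)) ⊆ univ.erase i := by
      intro j hj
      refine Finset.mem_erase.mpr ⟨?_, Finset.mem_univ j⟩
      rintro rfl
      have := (Finset.mem_filter.mp hj).2
      rw [hci] at this
      simp at this
    calc occ.card ≤ _ := h1
      _ ≤ (univ.erase i).card := Finset.card_le_card h2
      _ = M - 1 := by
        rw [Finset.card_erase_of_mem (Finset.mem_univ i), Finset.card_univ, Fintype.card_fin]
  have hgoodcard : K - M + 1 ≤ (occᶜ : Finset (Fin K)).card := by
    rw [Finset.card_compl, Fintype.card_fin]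
    omega
  calc ((K - M + 1 : ℕ) : ℝ≥0∞) / K * (1 - (K:ℝ≥0∞)⁻¹) ^ (M - 1)
      ≤ ((occᶜ : Finset (Fin K)).card : ℝ≥0∞) / K * (1 - (K:ℝ≥0∞)⁻¹) ^ J.card := by
        exact mul_le_mul' (ENNReal.div_le_div_right (Nat.cast_le.mpr hgoodcard) _)
          (pow_le_pow_of_le_one zero_le tsub_le_self hJcard)
    _ = ∑ a ∈ occᶜ, P (W a) := by
        rw [Finset.sum_congr rfl (fun a _ => hPW a), Finset.sum_const, nsmul_eq_mul,
          div_eq_mul_inv, mul_assoc]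
    _ = P (⋃ a ∈ occᶜ, W a) := hunion.symm
    _ ≤ P (SuccSet U r i c) := measure_mono hsub

lemma none_subset (r : ℕ) (i : Fin M) :
    {ω | assigned U (r+1) i ω = none} ⊆
      ⋃ c ∈ (univ.filter (fun c : Fin M → Option (Fin K) => c i = none)),
        ({ω | ∀ j, assigned U r j ω = c j} ∩ (SuccSet U r i c)ᶜ) := by
  classical
  intro ω hω
  simp only [Set.mem_setOf_eq] at hω
  rw [assigned_succ'] at hω
  rcases hri : assigned U r i ω with _ | a
  · rw [hri] at hω
    simp only [Set.mem_iUnion]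
    refine ⟨fun j => assigned U r j ω, ?_, fun j => rfl, ?_⟩
    · simp [hri]
    · intro hsucc
      obtain ⟨h1, h2⟩ := hsucc
      have hcond : ∀ j : Fin M, j ≠ i →
          (assigned U r j ω).getD (U r j ω) ≠ (none : Option (Fin K)).getD (U r i ω) := by
        intro j hji
        rcases hrj : assigned U r j ω with _ | a
        · simpa using h2 j hrj hji
        · simpa using fun h => (h1 j a hrj) h.symm
      rw [if_pos hcond] at hω
      exact Option.some_ne_none _ hω
  · rw [hri] at hω
    exact (Option.some_ne_none _ hω).elim

lemma partition_none [MeasurableSpace Ω] (P : Measure Ω)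
    (r : ℕ) (i : Fin M)
    (hEmeas : ∀ c : Fin M → Option (Fin K),
      MeasurableSet {ω | ∀ j, assigned U r j ω = c j}) :
    ∑ c ∈ (univ.filter (fun c : Fin M → Option (Fin K) => c i = none)),
        P {ω | ∀ j, assigned U r j ω = c j}
      = P {ω | assigned U r i ω = none} := by
  classical
  rw [← measure_biUnion_finset]
  · congr 1
    ext ω
    simp only [Set.mem_iUnion, Finset.mem_filter, Finset.mem_univ, true_and,
      Set.mem_setOf_eq]
    constructor
    · rintro ⟨c, hc, hω⟩
      rw [hω i, hc]
    · intro h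
      exact ⟨fun j => assigned U r j ω, h, fun j => rfl⟩
  · intro c hc d hd hcd
    refine Set.disjoint_left.mpr fun ω hωc hωd => hcd ?_
    funext j
    rw [← hωc j, ← hωd j]
  · exact fun c _ => hEmeas c

/-- lower bound on the per-round success probability -/
noncomputable def pENN (K M : ℕ) : ℝ≥0∞ :=
  ((K - M + 1 : ℕ) : ℝ≥0∞) / K * (1 - (K:ℝ≥0∞)⁻¹) ^ (M - 1)

lemma pENN_le_one (K M : ℕ) (hM : 0 < M) (hMK : M < K) : pENN K M ≤ 1 := by
  have hK : (0:ℕ) < K := hM.trans hMK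
  apply mul_le_one'
  · rw [ENNReal.div_le_iff (by exact_mod_cast hK.ne') (by simp), one_mul]
    exact_mod_cast (by omega : K - M + 1 ≤ K)
  · exact pow_le_one' tsub_le_self _

lemma none_prob_le [MeasurableSpace Ω] (P : Measure Ω) [IsProbabilityMeasure P]
    (hindep : iIndepFun (fun (p : ℕ × Fin M) ω => U p.1 p.2 ω) P)
    (hmeas : ∀ n i, Measurable (U n i))
    (hunif : ∀ n i (j : Fin K), P {ω | U n i ω = j} = (K : ENNReal)⁻¹)
    (hM : 0 < M) (hMK : M < K) (r : ℕ) (i : Fin M) :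
    P {ω | assigned U r i ω = none} ≤ (1 - pENN K M) ^ r := by
  classical
  have hK : 0 < K := hM.trans hMK
  induction r with
  | zero => simpa using prob_le_one
  | succ r ih =>
    have hEmeas : ∀ c : Fin M → Option (Fin K),
        MeasurableSet {ω | ∀ j, assigned U r j ω = c j} := fun c =>
      measurableSet_config U hmeas hK r (fun f => ∀ j, f j = c j)
    have hstep : P {ω | assigned U (r+1) i ω = none}
        ≤ (1 - pENN K M) * P {ω | assigned U r i ω = none} := by
      calc P {ω | assigned U (r+1) i ω = none}
          ≤ P (⋃ c ∈ (univ.filter (fun c : Fin M → Option (Fin K) => c i = none)),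
              ({ω | ∀ j, assigned U r j ω = c j} ∩ (SuccSet U r i c)ᶜ)) :=
            measure_mono (none_subset U r i)
        _ ≤ ∑ c ∈ (univ.filter (fun c : Fin M → Option (Fin K) => c i = none)),
              P ({ω | ∀ j, assigned U r j ω = c j} ∩ (SuccSet U r i c)ᶜ) :=
            measure_biUnion_finset_le _ _
        _ ≤ ∑ c ∈ (univ.filter (fun c : Fin M → Option (Fin K) => c i = none)),
              (1 - pENN K M) * P {ω | ∀ j, assigned U r j ω = c j} := by
            refine Finset.sum_le_sum fun c hc => ?_
            have hci : c i = none := (Finset.mem_filter.mp hc).2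
            have heq : P ({ω | ∀ j, assigned U r j ω = c j} ∩ (SuccSet U r i c)ᶜ)
                = P {ω | ∀ j, assigned U r j ω = c j} * P ((SuccSet U r i c)ᶜ) := by
              rw [succ_preimage, ← Set.preimage_compl]
              exact indep_round U P hindep hmeas hK r (fun f => ∀ j, f j = c j) _
            rw [heq, mul_comm]
            refine mul_le_mul' ?_ le_rfl
            rw [prob_compl_eq_one_sub (measurableSet_succ U hmeas r i c)]
            exact tsub_le_tsub_left (succ_prob_ge U P hindep hmeas hunif hM hMK r i c hci) 1
        _ = (1 - pENN K M) * P {ω | assigned U r i ω = none} := by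
            rw [← Finset.mul_sum, partition_none U P r i hEmeas]
    calc P {ω | assigned U (r+1) i ω = none}
        ≤ (1 - pENN K M) * P {ω | assigned U r i ω = none} := hstep
      _ ≤ (1 - pENN K M) * (1 - pENN K M) ^ r := mul_le_mul' le_rfl ih
      _ = (1 - pENN K M) ^ (r + 1) := (pow_succ' _ _).symm

end

set_option maxHeartbeats 1000000 in
theorem orthogonalization_expected_rounds
    {Ω : Type*} [MeasurableSpace Ω] (P : Measure Ω) [IsProbabilityMeasure P]
    (K M : ℕ) (hM : 0 < M) (hMK : M < K)
    (U : ℕ → Fin M → Ω → Fin K)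
    (hmeas : ∀ n i, Measurable (U n i))
    (hindep : iIndepFun
      (fun (p : ℕ × Fin M) ω => U p.1 p.2 ω) P)
    (hunif : ∀ n i (j : Fin K), P {ω | U n i ω = j} = (K : ENNReal)⁻¹) :
    ∫ ω, ((sInf {r : ℕ | ∀ i : Fin M, (assigned U r i ω).isSome} : ℕ) : ℝ) ∂P ≤
      (M : ℝ) * (K - 1) * (K + 1) / (K - M) := by
  classical
  have hK : 0 < K := hM.trans hMK
  set s : Ω → ℕ := fun ω => sInf {r : ℕ | ∀ i : Fin M, (assigned U r i ω).isSome} with hs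
  set A : ℕ → Set Ω := fun r => {ω | ∀ i : Fin M, (assigned U r i ω).isSome} with hA
  have hAmeas : ∀ r, MeasurableSet (A r) := fun r =>
    measurableSet_config U hmeas hK r (fun f => ∀ i, (f i).isSome)
  have hAmono : ∀ r r', r ≤ r' → A r ⊆ A r' := by
    intro r r' hrr'
    induction r' with
    | zero => rw [Nat.le_zero.mp hrr']
    | succ r' ih =>
      rcases Nat.lt_or_ge r (r' + 1) with h | h
      · refine (ih (Nat.lt_succ_iff.mp h)).trans fun ω hω i => ?_
        obtain ⟨a, ha⟩ := Option.isSome_iff_exists.mp (hω i)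
        rw [assigned_stay' U ha]
        rfl
      · rw [Nat.le_antisymm hrr' h]
  -- {s ≤ m} sets
  have hsle : ∀ m, {ω | s ω ≤ m} = A m ∪ ⋂ r, (A r)ᶜ := by
    intro m
    ext ω
    simp only [Set.mem_setOf_eq, Set.mem_union, Set.mem_iInter, Set.mem_compl_iff]
    constructor
    · intro h
      by_cases hne : ∃ r, ω ∈ A r
      · left
        have hmem : s ω ∈ {r : ℕ | ∀ i : Fin M, (assigned U r i ω).isSome} :=
          Nat.sInf_mem hne
        exact hAmono (s ω) m h hmem
      · right
        intro r hr
        exact hne ⟨r, hr⟩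
    · rintro (h | h)
      · exact Nat.sInf_le h
      · have : {r : ℕ | ∀ i : Fin M, (assigned U r i ω).isSome} = ∅ := by
          ext r
          simp only [Set.mem_setOf_eq, Set.mem_empty_iff_false, iff_false]
          exact fun hcon => h r hcon
        simp [hs, this]
  have hslemeas : ∀ m, MeasurableSet {ω | s ω ≤ m} := by
    intro m
    rw [hsle m]
    exact (hAmeas m).union (MeasurableSet.iInter fun r => (hAmeas r).compl)
  have hsmeas : Measurable s := by
    apply measurable_to_countable'
    intro m
    rcases m with _ | m
    · have : s ⁻¹' {0} = {ω | s ω ≤ 0} := by ext ω; simp [Nat.le_zero]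
      rw [this]; exact hslemeas 0
    · have : s ⁻¹' {m + 1} = {ω | s ω ≤ m + 1} \ {ω | s ω ≤ m} := by
        ext ω
        simp only [Set.mem_preimage, Set.mem_singleton_iff, Set.mem_diff, Set.mem_setOf_eq]
        omega
      rw [this]; exact (hslemeas (m+1)).diff (hslemeas m)
  have hltmeas : ∀ n, MeasurableSet {ω | n < s ω} := by
    intro n
    have : {ω | n < s ω} = {ω | s ω ≤ n}ᶜ := by ext ω; simp
    rw [this]; exact (hslemeas n).compl
  -- lintegral identity
  have key : ∀ ω, ((s ω : ℝ≥0∞))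
      = ∑' n : ℕ, Set.indicator {ω' | n < s ω'} (fun _ => (1:ℝ≥0∞)) ω := by
    intro ω
    rw [tsum_eq_sum (s := Finset.range (s ω)) (fun n hn => Set.indicator_of_notMem
      (by simp only [Set.mem_setOf_eq]; simpa using hn) _)]
    rw [Finset.sum_congr rfl (fun n hn => Set.indicator_of_mem
      (by simpa using Finset.mem_range.mp hn) _)]
    simp
  have hlin : ∫⁻ ω, (s ω : ℝ≥0∞) ∂P = ∑' n : ℕ, P {ω | n < s ω} := by
    rw [lintegral_congr key,
      lintegral_tsum (fun n => ((measurable_const.indicator (hltmeas n)).aemeasurable))]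
    congr 1
    funext n
    rw [lintegral_indicator_const (hltmeas n), one_mul]
  -- tail bound
  have htail : ∀ n, P {ω | n < s ω} ≤ (M:ℝ≥0∞) * (1 - pENN K M) ^ n := by
    intro n
    have hsub : {ω | n < s ω} ⊆ ⋃ i : Fin M, {ω | assigned U n i ω = none} := by
      intro ω hω
      simp only [Set.mem_setOf_eq] at hω
      by_contra h
      simp only [Set.mem_iUnion, Set.mem_setOf_eq, not_exists] at h
      have : ω ∈ A n := fun i => by
        rcases ha : assigned U n i ω with _ | a
        · exact absurd ha (h i)
        · rfl
      have hle : s ω ≤ n := Nat.sInf_le this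
      omega
    calc P {ω | n < s ω} ≤ ∑' i : Fin M, P {ω | assigned U n i ω = none} :=
          (measure_mono hsub).trans (measure_iUnion_le _)
      _ = ∑ i : Fin M, P {ω | assigned U n i ω = none} := tsum_fintype _
      _ ≤ ∑ _i : Fin M, (1 - pENN K M) ^ n := Finset.sum_le_sum fun i _ =>
          none_prob_le U P hindep hmeas hunif hM hMK n i
      _ = (M:ℝ≥0∞) * (1 - pENN K M) ^ n := by
          rw [Finset.sum_const, nsmul_eq_mul, Finset.card_univ, Fintype.card_fin]
  have hp1 : pENN K M ≤ 1 := pENN_le_one K M hM hMK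
  have hlintotal : ∫⁻ ω, (s ω : ℝ≥0∞) ∂P ≤ (M:ℝ≥0∞) * (pENN K M)⁻¹ := by
    rw [hlin]
    calc ∑' n : ℕ, P {ω | n < s ω} ≤ ∑' n : ℕ, (M:ℝ≥0∞) * (1 - pENN K M) ^ n :=
        ENNReal.tsum_le_tsum htail
      _ = (M:ℝ≥0∞) * (1 - (1 - pENN K M))⁻¹ := by
          rw [ENNReal.tsum_mul_left, ENNReal.tsum_geometric]
      _ = (M:ℝ≥0∞) * (pENN K M)⁻¹ := by
          rw [ENNReal.sub_sub_cancel ENNReal.one_ne_top hp1]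
  -- real form of pENN
  set pr : ℝ := ((K - M + 1 : ℕ) : ℝ) / K * (1 - (K:ℝ)⁻¹) ^ (M - 1) with hpr
  have hKR : (0:ℝ) < K := by exact_mod_cast hK
  have hbase : (0:ℝ) ≤ 1 - (K:ℝ)⁻¹ := by
    rw [sub_nonneg]
    rw [inv_le_one_iff₀]
    right
    exact_mod_cast hK
  have hpENN : pENN K M = ENNReal.ofReal pr := by
    have e1 : ((K - M + 1 : ℕ) : ℝ≥0∞) / (K:ℝ≥0∞)
        = ENNReal.ofReal (((K - M + 1 : ℕ) : ℝ) / (K:ℝ)) := by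
      rw [ENNReal.ofReal_div_of_pos hKR, ENNReal.ofReal_natCast, ENNReal.ofReal_natCast]
    have e2 : (1 - (K:ℝ≥0∞)⁻¹) = ENNReal.ofReal (1 - (K:ℝ)⁻¹) := by
      rw [ENNReal.ofReal_sub _ (by positivity), ENNReal.ofReal_one,
        ENNReal.ofReal_inv_of_pos hKR, ENNReal.ofReal_natCast]
    rw [hpr]
    unfold pENN
    rw [e1, e2, ← ENNReal.ofReal_pow hbase, ← ENNReal.ofReal_mul (by positivity)]
  -- lower bound on pr
  have hcast1 : ((K - M + 1 : ℕ) : ℝ) = (K:ℝ) - M + 1 := by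
    push_cast [Nat.cast_sub hMK.le]
    ring
  have hcast2 : ((M - 1 : ℕ) : ℝ) = (M:ℝ) - 1 := by
    push_cast [Nat.cast_sub hM]
    ring
  have hMR : (1:ℝ) ≤ M := by exact_mod_cast hM
  have hMKR : (M:ℝ) + 1 ≤ K := by exact_mod_cast hMK
  have hbern : ((K:ℝ) - M + 1) / K ≤ (1 - (K:ℝ)⁻¹) ^ (M - 1) := by
    have h := one_add_mul_le_pow (a := -(K:ℝ)⁻¹)
      (by nlinarith [inv_nonneg.mpr hKR.le]) (M - 1)
    have h2 : (1 : ℝ) + ((M - 1 : ℕ) : ℝ) * (-(K:ℝ)⁻¹) = ((K:ℝ) - M + 1) / K := by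
      rw [hcast2]
      field_simp
      ring
    rw [h2] at h
    calc ((K:ℝ) - M + 1) / K ≤ (1 + -(K:ℝ)⁻¹) ^ (M - 1) := h
      _ = (1 - (K:ℝ)⁻¹) ^ (M - 1) := by rw [← sub_eq_add_neg]
  have hlb : ((K:ℝ) - M + 1) ^ 2 / (K:ℝ) ^ 2 ≤ pr := by
    rw [hpr, hcast1]
    have h1 : (0:ℝ) ≤ ((K:ℝ) - M + 1) / K := by
      apply div_nonneg _ hKR.le
      nlinarith
    calc ((K:ℝ) - M + 1) ^ 2 / (K:ℝ) ^ 2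
        = (((K:ℝ) - M + 1) / K) * (((K:ℝ) - M + 1) / K) := by ring
      _ ≤ (((K:ℝ) - M + 1) / K) * ((1 - (K:ℝ)⁻¹) ^ (M - 1)) :=
          mul_le_mul_of_nonneg_left hbern h1
  have hprpos : (0:ℝ) < pr := by
    have : (0:ℝ) < ((K:ℝ) - M + 1) ^ 2 / (K:ℝ) ^ 2 := by
      apply div_pos _ (by positivity)
      nlinarith
    linarith
  -- the main real inequality
  have hmain : (M:ℝ) * pr⁻¹ ≤ (M : ℝ) * (K - 1) * (K + 1) / (K - M) := by
    have hden : (0:ℝ) < ((K:ℝ) - M + 1) ^ 2 := by nlinarith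
    have hKM : (0:ℝ) < (K:ℝ) - M := by nlinarith
    have hinv : pr⁻¹ ≤ (K:ℝ) ^ 2 / ((K:ℝ) - M + 1) ^ 2 := by
      have hlbpos : (0:ℝ) < ((K:ℝ) - M + 1) ^ 2 / (K:ℝ) ^ 2 := div_pos hden (by positivity)
      calc pr⁻¹ ≤ (((K:ℝ) - M + 1) ^ 2 / (K:ℝ) ^ 2)⁻¹ := by gcongr
        _ = (K:ℝ) ^ 2 / ((K:ℝ) - M + 1) ^ 2 := by rw [inv_div]
    calc (M:ℝ) * pr⁻¹ ≤ (M:ℝ) * ((K:ℝ)^2 / ((K:ℝ) - M + 1)^2) := by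
          apply mul_le_mul_of_nonneg_left hinv (by positivity)
      _ = (M:ℝ) * (K:ℝ)^2 / ((K:ℝ) - M + 1)^2 := by rw [mul_div_assoc]
      _ ≤ (M : ℝ) * (K - 1) * (K + 1) / (K - M) := by
          rw [div_le_div_iff₀ hden hKM]
          have hMpos : (0:ℝ) ≤ M := le_trans zero_le_one hMR
          have hK21 : (0:ℝ) ≤ (K:ℝ)^2 - 1 := by nlinarith
          have h3K : (0:ℝ) ≤ 3*(K:ℝ)^2 - 4 := by nlinarith
          nlinarith [mul_nonneg (mul_nonneg hMpos hK21) (sq_nonneg ((K:ℝ) - M - 1)),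
            mul_nonneg (mul_nonneg hMpos hKM.le) h3K]
  -- put it together
  have hfinal : ∫⁻ ω, (s ω : ℝ≥0∞) ∂P
      ≤ ENNReal.ofReal ((M : ℝ) * (K - 1) * (K + 1) / (K - M)) := by
    refine hlintotal.trans ?_
    rw [hpENN, ← ENNReal.ofReal_inv_of_pos hprpos, ← ENNReal.ofReal_natCast M,
      ← ENNReal.ofReal_mul (by positivity)]
    exact ENNReal.ofReal_le_ofReal hmain
  have hnonneg : (0:ℝ) ≤ (M : ℝ) * (K - 1) * (K + 1) / (K - M) := by
    apply div_nonneg _ (by nlinarith)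
    nlinarith
  have hmc : Measurable (fun ω => ((s ω : ℕ) : ℝ)) := measurable_from_nat.comp hsmeas
  rw [MeasureTheory.integral_eq_lintegral_of_nonneg_ae
    (Filter.Eventually.of_forall fun ω => Nat.cast_nonneg _) hmc.aestronglyMeasurable]
  have hcongr : ∫⁻ ω, ENNReal.ofReal ((s ω : ℕ) : ℝ) ∂P = ∫⁻ ω, ((s ω : ℕ) : ℝ≥0∞) ∂P :=
    lintegral_congr fun ω => ENNReal.ofReal_natCast _
  rw [hcongr]
  exact ENNReal.toReal_le_of_le_ofReal hnonneg hfinal
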